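/- Let K be a field, ℓ ≥ 1, and r ≥ 2. If u₁,…,u_r are units of the Laurent polynomial ring K[t₁^{±1},…,t_ℓ^{±1}] such that no two of them are proportional over K (i.e., uᵢ ≠ c·uⱼ for all i ≠ j and all c ∈ K), then the sum u₁ + u₂ + ⋯ + u_r is not a unit of K[t₁^{±1},…,t_ℓ^{±1}]. -/

import Mathlib

open AddMonoidAlgebra Finsupp

noncomputable instance (priority := 10001) lexPiIntLO (ℓ : ℕ) :
    LinearOrder (Lex (Fin ℓ → ℤ)) :=
  inferInstance

private lemma mul_coeff_top {K : Type*} [Semiring K] {A G : Type*} [AddCommGroup A]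
    [AddCommGroup G] [LinearOrder G] [IsOrderedCancelAddMonoid G] (e : A →+ G) (he : Function.Injective e)
    {p q : AddMonoidAlgebra K A} {ap aq : A}
    (hp : ∀ a ∈ p.coeff.support, e a ≤ e ap) (hq : ∀ a ∈ q.coeff.support, e a ≤ e aq) :
    (p * q).coeff (ap + aq) = p.coeff ap * q.coeff aq := by
  classical
  simp_rw [AddMonoidAlgebra.mul_apply, Finsupp.sum]
  rw [Finset.sum_eq_single ap, Finset.sum_eq_single aq, if_pos rfl]
  · refine fun a ha hne => if_neg fun h2 => ?_
    apply_fun e at h2; simp_rw [map_add] at h2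
    exact (add_lt_add_of_le_of_lt le_rfl (((hq a ha).lt_of_ne (fun h => hne (he h))))).ne h2
  · intro h; rw [if_pos rfl, Finsupp.notMem_support_iff.1 h, mul_zero]
  · refine fun a ha hne => Finset.sum_eq_zero fun a' ha' => if_neg fun h2 => ?_
    apply_fun e at h2; simp_rw [map_add] at h2
    exact (add_lt_add_of_lt_of_le ((hp a ha).lt_of_ne (fun h => hne (he h))) (hq a' ha')).ne h2
  · exact fun h => Finset.sum_eq_zero fun a _ => ite_eq_right_iff.mpr fun _ => by
      rw [Finsupp.notMem_support_iff.mp h, zero_mul]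

private lemma unit_eq_single {K : Type*} [Field K] {ℓ : ℕ}
    {f : AddMonoidAlgebra K (Fin ℓ → ℤ)} (hf : IsUnit f) :
    ∃ a : Fin ℓ → ℤ, f = AddMonoidAlgebra.single a (f.coeff a) := by
  classical
  letI : LinearOrder (Lex (Fin ℓ → ℤ)) := inferInstance
  letI : LinearOrder (Lex (Fin ℓ → ℤ))ᵒᵈ := inferInstance
  let e : (Fin ℓ → ℤ) →+ Lex (Fin ℓ → ℤ) := AddMonoidHom.mk' (fun a => toLex a) (fun a b => rfl)
  have he : Function.Injective e := fun a b h => toLex.injective h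
  let e' : (Fin ℓ → ℤ) →+ (Lex (Fin ℓ → ℤ))ᵒᵈ :=
    AddMonoidHom.mk' (fun a => OrderDual.toDual (toLex a)) (fun a b => rfl)
  have he' : Function.Injective e' := fun a b h => toLex.injective (OrderDual.toDual.injective h)
  obtain ⟨v, hv⟩ := hf.exists_right_inv
  have hf0 : f.coeff.support.Nonempty :=
    Finsupp.support_nonempty_iff.2 (fun h => hf.ne_zero (AddMonoidAlgebra.coeff_eq_zero.1 h))
  have hv0 : v.coeff.support.Nonempty := Finsupp.support_nonempty_iff.2
    (by intro h; rw [AddMonoidAlgebra.coeff_eq_zero] at h; subst h; simp at hv)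
  obtain ⟨af, haf, hafm⟩ := f.coeff.support.exists_max_image e hf0
  obtain ⟨av, hav, havm⟩ := v.coeff.support.exists_max_image e hv0
  obtain ⟨bf, hbf, hbfm⟩ := f.coeff.support.exists_max_image e' hf0
  obtain ⟨bv, hbv, hbvm⟩ := v.coeff.support.exists_max_image e' hv0
  have htop : (f * v).coeff (af + av) = f.coeff af * v.coeff av := mul_coeff_top e he hafm havm
  have hbot : (f * v).coeff (bf + bv) = f.coeff bf * v.coeff bv := mul_coeff_top e' he' hbfm hbvm
  have hne1 : f.coeff af * v.coeff av ≠ 0 :=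
    mul_ne_zero (Finsupp.mem_support_iff.1 haf) (Finsupp.mem_support_iff.1 hav)
  have hne2 : f.coeff bf * v.coeff bv ≠ 0 :=
    mul_ne_zero (Finsupp.mem_support_iff.1 hbf) (Finsupp.mem_support_iff.1 hbv)
  have hmem1 : af + av ∈ (f * v).coeff.support := Finsupp.mem_support_iff.2 (htop ▸ hne1)
  have hmem2 : bf + bv ∈ (f * v).coeff.support := Finsupp.mem_support_iff.2 (hbot ▸ hne2)
  rw [hv, one_def, AddMonoidAlgebra.coeff_single, Finsupp.support_single_ne_zero _ (one_ne_zero (α := K)),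
    Finset.mem_singleton] at hmem1 hmem2
  -- so af + av = 0 and bf + bv = 0
  have heq : e af = e bf := by
    have h1 : e bf ≤ e af := hafm bf hbf
    have h2 : e bv ≤ e av := hbvm av hav
    have h3 : e af + e av = 0 := by rw [← map_add, hmem1, map_zero]
    have h4 : e bf + e bv = 0 := by rw [← map_add, hmem2, map_zero]
    refine le_antisymm ?_ h1
    have : e af = - e av := eq_neg_of_add_eq_zero_left h3
    have h5 : e bf = - e bv := eq_neg_of_add_eq_zero_left h4
    rw [this, h5]
    exact neg_le_neg h2
  refine ⟨af, AddMonoidAlgebra.coeff_injective ?_⟩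
  rw [AddMonoidAlgebra.coeff_single]
  refine Finsupp.eq_single_iff.2 ⟨fun a ha => ?_, rfl⟩
  have hle : e a ≤ e af := hafm a ha
  have hge : e bf ≤ e a := hbfm a ha
  rw [heq] at hle
  exact Finset.mem_singleton.2 (he (heq ▸ le_antisymm hle hge))

/-- If `u₁,…,u_r` (with `r ≥ 2`) are pairwise non-proportional units of the Laurent
polynomial ring `K[t₁^±1,…,t_ℓ^±1]` (realized as the group algebra of `ℤ^ℓ` over `K`),
then their sum `u₁ + ⋯ + u_r` is not a unit. -/
theorem sum_of_nonproportional_units_not_unit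
    {K : Type*} [Field K] (ℓ r : ℕ) (hℓ : 1 ≤ ℓ) (hr : 2 ≤ r)
    (u : Fin r → AddMonoidAlgebra K (Fin ℓ → ℤ))
    (hu : ∀ i, IsUnit (u i))
    (hprop : ∀ i j, i ≠ j → ∀ c : K, u i ≠ c • u j) :
    ¬ IsUnit (∑ i, u i) := by
  classical
  intro hS
  -- each uᵢ is a single monomial
  have husingle : ∀ i, ∃ a : Fin ℓ → ℤ, u i = AddMonoidAlgebra.single a ((u i).coeff a) :=
    fun i => unit_eq_single (hu i)
  choose a ha using husingle
  have hc0 : ∀ i, (u i).coeff (a i) ≠ 0 := by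
    intro i h
    exact (hu i).ne_zero (by rw [ha i, h, AddMonoidAlgebra.single_zero])
  -- exponents are pairwise distinct
  have hainj : Function.Injective a := by
    intro i j hij
    by_contra hne
    have hci := hc0 i
    have hcj := hc0 j
    set ci := (u i).coeff (a i) with hcidef
    set cj := (u j).coeff (a j) with hcjdef
    refine hprop i j hne (ci * cj⁻¹) ?_
    rw [ha i, ha j, AddMonoidAlgebra.smul_single, smul_eq_mul,
      inv_mul_cancel_right₀ hcj, hij, hcidef, hij]
  -- the sum has coefficient uᵢ (a i) at a i
  have hcoeff : ∀ i, (∑ j, u j).coeff (a i) = (u i).coeff (a i) := by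
    intro i
    rw [AddMonoidAlgebra.coeff_sum, Finsupp.finset_sum_apply]
    rw [Finset.sum_eq_single i ?_ (by simp)]
    intro j _ hji
    rw [ha j, AddMonoidAlgebra.coeff_single, Finsupp.single_apply, if_neg (fun h => hji (hainj h))]
  obtain ⟨b, hb⟩ := unit_eq_single hS
  -- but a single monomial can have only one exponent with nonzero coefficient
  have key : ∀ i, a i = b := by
    intro i
    have : (∑ j, u j).coeff (a i) ≠ 0 := by rw [hcoeff i]; exact hc0 i
    rw [hb, AddMonoidAlgebra.coeff_single, Finsupp.single_apply] at this
    by_contra h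
    exact this (if_neg (fun hh => h hh.symm))
  have h01 : (⟨0, by omega⟩ : Fin r) ≠ ⟨1, by omega⟩ := by simp [Fin.ext_iff]
  exact h01 (hainj ((key _).trans (key _).symm))
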